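/- Let (λ_n) be a sequence in (0,∞), Λ ∈ ℕ with Λ ≥ 1, and N_Λ ∈ ℕ such that λ_n ≥ 1/Λ for all n ≥ N_Λ, and suppose γ₃ : ℕ → ℕ is a Cauchy modulus of the series Σ_{n=0}^∞ |λ_n − λ_{n+1}|. Then γ₁(k) = max{N_Λ, γ₃(Λ(k+1) − 1)} is a Cauchy modulus of the series Σ_{n=0}^∞ |1 − λ_{n+1}/λ_n|, and γ₁ is also a Cauchy modulus of the series Σ_{n=0}^∞ |1 − λ_n/λ_{n+1}|. -/

import Mathlib

/-- From a Cauchy modulus of `Σ |λ_n - λ_{n+1}|` and a uniform lower bound `1/Λ` on `λ_n`,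
one gets Cauchy moduli of `Σ |1 - λ_{n+1}/λ_n|` and `Σ |1 - λ_n/λ_{n+1}|`. -/
theorem stmt_9 (lam : ℕ → ℝ) (hlam : ∀ n, 0 < lam n)
    (Λ : ℕ) (hΛ : 1 ≤ Λ) (NΛ : ℕ)
    (hlow : ∀ n : ℕ, NΛ ≤ n → 1 / (Λ : ℝ) ≤ lam n)
    (γ₃ : ℕ → ℕ)
    (hγ₃ : ∀ k : ℕ, ∀ n, γ₃ k ≤ n → ∀ p : ℕ,
      ∑ i ∈ Finset.Icc (n + 1) (n + p), |lam i - lam (i + 1)| ≤ 1 / (k + 1)) :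
    (∀ k : ℕ, ∀ n, max NΛ (γ₃ (Λ * (k + 1) - 1)) ≤ n → ∀ p : ℕ,
      ∑ i ∈ Finset.Icc (n + 1) (n + p), |1 - lam (i + 1) / lam i| ≤ 1 / (k + 1)) ∧
    (∀ k : ℕ, ∀ n, max NΛ (γ₃ (Λ * (k + 1) - 1)) ≤ n → ∀ p : ℕ,
      ∑ i ∈ Finset.Icc (n + 1) (n + p), |1 - lam i / lam (i + 1)| ≤ 1 / (k + 1)) := by
  have hΛ1 : (1:ℝ) ≤ (Λ:ℝ) := by exact_mod_cast hΛ
  have hΛ0 : (0:ℝ) < (Λ:ℝ) := lt_of_lt_of_le one_pos hΛ1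
  -- pointwise bound
  have key : ∀ a b : ℝ, 0 < a → 1/(Λ:ℝ) ≤ a → |1 - b/a| ≤ (Λ:ℝ) * |a - b| := by
    intro a b ha hla
    have h1 : (1 : ℝ) - b/a = (a - b)/a := by field_simp
    rw [h1, abs_div, abs_of_pos ha, div_eq_mul_inv, mul_comm ((Λ:ℝ)) _]
    refine mul_le_mul_of_nonneg_left ?_ (abs_nonneg _)
    rw [← one_div]
    exact (one_div_le ha hΛ0).mpr hla
  -- generic summation argument
  have main : ∀ f : ℕ → ℝ, (∀ i, NΛ ≤ i → |f i| ≤ (Λ:ℝ) * |lam i - lam (i+1)|) →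
      ∀ k : ℕ, ∀ n, max NΛ (γ₃ (Λ * (k + 1) - 1)) ≤ n → ∀ p : ℕ,
      ∑ i ∈ Finset.Icc (n + 1) (n + p), |f i| ≤ 1/(k+1) := by
    intro f hf k n hn p
    have hNn : NΛ ≤ n := le_trans (le_max_left _ _) hn
    have hγn : γ₃ (Λ * (k + 1) - 1) ≤ n := le_trans (le_max_right _ _) hn
    have hm : ((Λ * (k + 1) - 1 : ℕ) : ℝ) + 1 = (Λ:ℝ) * ((k:ℝ)+1) := by
      have : (Λ * (k + 1) - 1 : ℕ) + 1 = Λ * (k + 1) :=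
        Nat.succ_pred_eq_of_pos (Nat.mul_pos hΛ (Nat.succ_pos k))
      have := congrArg (fun x : ℕ => (x : ℝ)) this
      push_cast at this
      linarith
    calc ∑ i ∈ Finset.Icc (n + 1) (n + p), |f i|
        ≤ ∑ i ∈ Finset.Icc (n + 1) (n + p), (Λ:ℝ) * |lam i - lam (i+1)| := by
          refine Finset.sum_le_sum fun i hi => ?_
          have : n + 1 ≤ i := (Finset.mem_Icc.mp hi).1
          exact hf i (le_trans hNn (by omega))
      _ = (Λ:ℝ) * ∑ i ∈ Finset.Icc (n + 1) (n + p), |lam i - lam (i+1)| :=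
          (Finset.mul_sum _ _ _).symm
      _ ≤ (Λ:ℝ) * (1 / (((Λ * (k + 1) - 1 : ℕ) : ℝ) + 1)) :=
          mul_le_mul_of_nonneg_left (hγ₃ _ n hγn p) hΛ0.le
      _ = 1/(k+1) := by
          rw [hm]
          field_simp
  constructor
  · refine main _ (fun i hi => ?_)
    exact key (lam i) (lam (i+1)) (hlam i) (hlow i hi)
  · refine main _ (fun i hi => ?_)
    rw [abs_sub_comm (lam i) (lam (i+1))]
    exact key (lam (i+1)) (lam i) (hlam (i+1)) (hlow (i+1) (by omega))
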